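/- Let A be a commutative ring of characteristic p > 0, M an A-module, and φ : M → M ⊗ A[ε]/(ε^p) an A-linear map, written φ = ∑_{i=0}^{p-1} φ_i ε^i with φ_i : M → M A-linear. Then φ satisfies the counit and coassociativity axioms of a comodule over the Hopf algebra A[ε]/(ε^p) (ε primitive) if and only if φ_0 = id_M and φ_i ∘ φ_j = binom(i+j, i) · φ_{i+j} for all 0 ≤ i, j < p (with φ_{i+j} = 0 for i + j ≥ p). In this case φ_1^p = 0 and φ = exp(φ_1 ε). -/

import Mathlib

open Polynomial TensorProduct

noncomputable section

/-- `A[ε] = A[x]/(x^p)`. -/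
abbrev Aeps (p : ℕ) (A : Type*) [CommRing A] : Type _ :=
  AdjoinRoot ((X : A[X]) ^ p)

/-- The class of `x`, i.e. `ε`. -/
def eps (p : ℕ) (A : Type*) [CommRing A] : Aeps p A := AdjoinRoot.root _

/-- The `A`-linear map `M → M ⊗ A[ε]/(ε^p)`, `m ↦ ∑_{i<p} φᵢ(m) ⊗ ε^i`, built from a
family of components `φᵢ : M → M`. -/
def coactOf (p : ℕ) (A : Type*) [CommRing A]
    {M : Type*} [AddCommGroup M] [Module A M] (φ : ℕ → Module.End A M) :
    M →ₗ[A] M ⊗[A] Aeps p A :=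
  ∑ i ∈ Finset.range p,
    (TensorProduct.mk A M (Aeps p A)).flip ((eps p A) ^ i) ∘ₗ (φ i)

section aux
variable (p : ℕ) (A : Type*) [CommRing A] [Nontrivial A]

def basisEps : Module.Basis (Fin p) A (Aeps p A) :=
  (AdjoinRoot.powerBasis' (monic_X_pow (R := A) p)).basis.reindex
    (finCongr (by rw [AdjoinRoot.powerBasis'_dim, natDegree_X_pow]))

lemma basisEps_apply (i : Fin p) : basisEps p A i = eps p A ^ (i : ℕ) := by
  rw [basisEps, Module.Basis.reindex_apply, PowerBasis.basis_eq_pow]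
  simp [AdjoinRoot.powerBasis'_gen, eps]

lemma coord_eps_pow (k : Fin p) (j : ℕ) (hj : j < p) :
    (basisEps p A).coord k (eps p A ^ j) = if j = (k:ℕ) then 1 else 0 := by
  have : eps p A ^ j = basisEps p A ⟨j, hj⟩ := (basisEps_apply p A ⟨j, hj⟩).symm
  rw [this, Module.Basis.coord_apply, Module.Basis.repr_self, Finsupp.single_apply]
  simp [Fin.ext_iff]

variable {M : Type*} [AddCommGroup M] [Module A M]

/-- extraction of the `k`-th coefficient -/
def ext1 (k : Fin p) : M ⊗[A] Aeps p A →ₗ[A] M :=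
  (TensorProduct.rid A M).toLinearMap ∘ₗ LinearMap.lTensor M ((basisEps p A).coord k)

lemma ext1_tmul (k : Fin p) (m : M) (a : Aeps p A) :
    ext1 p A k (m ⊗ₜ a) = (basisEps p A).coord k a • m := by
  simp [ext1]

lemma extE (k : Fin p) (g : ℕ → M) :
    ext1 p A k (∑ j ∈ Finset.range p, g j ⊗ₜ[A] (eps p A ^ j)) = g k := by
  rw [map_sum]
  have h : ∀ j ∈ Finset.range p, ext1 p A k (g j ⊗ₜ[A] (eps p A ^ j))
      = if j = (k:ℕ) then g j else 0 := by
    intro j hj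
    rw [ext1_tmul, coord_eps_pow p A k j (Finset.mem_range.mp hj)]
    split <;> simp
  rw [Finset.sum_congr rfl h, Finset.sum_ite_eq' (Finset.range p) (k:ℕ) g]
  simp [k.isLt]

end aux

section aux2
set_option linter.unusedSectionVars false
variable (p : ℕ) (A : Type*) [CommRing A] [Nontrivial A]
variable {M : Type*} [AddCommGroup M] [Module A M]

lemma coact_apply (φ : ℕ → Module.End A M) (m : M) :
    coactOf p A φ m = ∑ i ∈ Finset.range p, φ i m ⊗ₜ[A] (eps p A ^ i) := by
  simp [coactOf, LinearMap.sum_apply]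

lemma counit_eps_pow (counit : Aeps p A →ₐ[A] A) (hcounit : counit (eps p A) = 0) (i : ℕ) :
    counit (eps p A ^ i) = if i = 0 then 1 else 0 := by
  rw [map_pow, hcounit]
  rcases Nat.eq_zero_or_pos i with h | h
  · simp [h]
  · simp [zero_pow h.ne', h.ne']

end aux2

section aux3
set_option linter.unusedSectionVars false
variable (p : ℕ) (A : Type*) [CommRing A] [Nontrivial A]
variable {M : Type*} [AddCommGroup M] [Module A M]

lemma comul_eps_pow (comul : Aeps p A →ₐ[A] Aeps p A ⊗[A] Aeps p A)
    (hcomul : comul (eps p A) = eps p A ⊗ₜ 1 + 1 ⊗ₜ eps p A) (k : ℕ) :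
    comul (eps p A ^ k) = ∑ i ∈ Finset.range (k+1),
      (k.choose i) • ((eps p A ^ i) ⊗ₜ[A] (eps p A ^ (k-i))) := by
  rw [map_pow, hcomul, add_pow]
  refine Finset.sum_congr rfl fun i hi => ?_
  rw [Algebra.TensorProduct.tmul_pow, Algebra.TensorProduct.tmul_pow, one_pow, one_pow,
    Algebra.TensorProduct.tmul_mul_tmul, mul_one, one_mul, mul_comm, ← nsmul_eq_mul]

lemma G_form (φ : ℕ → Module.End A M) (htop : ∀ n, p ≤ n → φ n = 0)
    (comul : Aeps p A →ₐ[A] Aeps p A ⊗[A] Aeps p A)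
    (hcomul : comul (eps p A) = eps p A ⊗ₜ 1 + 1 ⊗ₜ eps p A) (m : M) :
    (TensorProduct.assoc A M (Aeps p A) (Aeps p A)).symm.toLinearMap
        (LinearMap.lTensor M comul.toLinearMap (coactOf p A φ m)) =
    ∑ j ∈ Finset.range p, (∑ i ∈ Finset.range p,
        (((i+j).choose i) • φ (i+j)) m ⊗ₜ[A] (eps p A ^ i)) ⊗ₜ[A] (eps p A ^ j) := by
  rw [coact_apply, map_sum, map_sum]
  have step1 : ∀ k ∈ Finset.range p,
      (TensorProduct.assoc A M (Aeps p A) (Aeps p A)).symm.toLinearMap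
        (LinearMap.lTensor M comul.toLinearMap (φ k m ⊗ₜ[A] (eps p A ^ k)))
      = ∑ i ∈ Finset.range p,
          (k.choose i) • ((φ k m ⊗ₜ[A] (eps p A ^ i)) ⊗ₜ[A] (eps p A ^ (k - i))) := by
    intro k hk
    rw [LinearMap.lTensor_tmul, AlgHom.toLinearMap_apply, comul_eps_pow p A comul hcomul k, tmul_sum, map_sum,
      ← Finset.sum_subset (Finset.range_subset_range.mpr (Finset.mem_range.mp hk))
        (fun i _ hi => by
          have : k < i := by simp only [Finset.mem_range, not_lt] at hi; omega
          simp [Nat.choose_eq_zero_of_lt this])]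
    exact Finset.sum_congr rfl fun i _ => by
      rw [tmul_smul, map_nsmul]
      exact congrArg _ (TensorProduct.assoc_symm_tmul _ _ _)
  rw [Finset.sum_congr rfl step1, Finset.sum_comm]
  have step2 : ∀ i ∈ Finset.range p,
      ∑ k ∈ Finset.range p, (k.choose i) • ((φ k m ⊗ₜ[A] (eps p A ^ i)) ⊗ₜ[A] (eps p A ^ (k - i)))
      = ∑ j ∈ Finset.range p,
          ((i+j).choose i) • ((φ (i+j) m ⊗ₜ[A] (eps p A ^ i)) ⊗ₜ[A] (eps p A ^ j)) := by
    intro i hi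
    have hi' := Finset.mem_range.mp hi
    rw [Finset.range_eq_Ico, ← Finset.sum_Ico_consecutive _ (Nat.zero_le i) hi'.le,
      show (∑ k ∈ Finset.Ico 0 i,
          (k.choose i) • ((φ k m ⊗ₜ[A] (eps p A ^ i)) ⊗ₜ[A] (eps p A ^ (k - i)))) = 0 from
        Finset.sum_eq_zero fun k hk => by
          simp [Nat.choose_eq_zero_of_lt (Finset.mem_Ico.mp hk).2],
      zero_add, Finset.sum_Ico_eq_sum_range]
    simp_rw [Nat.add_sub_cancel_left]
    rw [← Finset.range_eq_Ico]
    refine Finset.sum_subset (Finset.range_subset_range.mpr (by omega)) (fun j hj hj' => ?_)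
    have : p ≤ i + j := by
      simp only [Finset.mem_range] at hj hj'
      omega
    simp [htop _ this]
  rw [Finset.sum_congr rfl step2, Finset.sum_comm]
  refine Finset.sum_congr rfl fun j hj => ?_
  rw [TensorProduct.sum_tmul]
  refine Finset.sum_congr rfl fun i hi => ?_
  rw [LinearMap.smul_apply, ← Nat.cast_smul_eq_nsmul A, ← Nat.cast_smul_eq_nsmul A,
    smul_tmul', smul_tmul']

end aux3

section aux4
set_option linter.unusedSectionVars false
variable (p : ℕ) (A : Type*) [CommRing A] [Nontrivial A]
variable {M : Type*} [AddCommGroup M] [Module A M]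

lemma F_form (φ : ℕ → Module.End A M) (m : M) :
    LinearMap.rTensor (Aeps p A) (coactOf p A φ) (coactOf p A φ m)
    = ∑ j ∈ Finset.range p, (∑ i ∈ Finset.range p,
        (φ i ∘ₗ φ j) m ⊗ₜ[A] (eps p A ^ i)) ⊗ₜ[A] (eps p A ^ j) := by
  rw [coact_apply, map_sum]
  refine Finset.sum_congr rfl fun j _ => ?_
  rw [LinearMap.rTensor_tmul, coact_apply]
  simp [LinearMap.comp_apply]

lemma counit_form (φ : ℕ → Module.End A M) (hp : 0 < p)
    (counit : Aeps p A →ₐ[A] A) (hcounit : counit (eps p A) = 0) :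
    (TensorProduct.rid A M).toLinearMap ∘ₗ
      LinearMap.lTensor M counit.toLinearMap ∘ₗ coactOf p A φ = φ 0 := by
  ext m
  simp only [LinearMap.comp_apply, coact_apply, map_sum, LinearMap.lTensor_tmul,
    AlgHom.toLinearMap_apply, counit_eps_pow p A counit hcounit,
    LinearEquiv.coe_coe, TensorProduct.rid_tmul, ite_smul, one_smul, zero_smul]
  rw [Finset.sum_ite_eq' (Finset.range p) 0 (fun i => φ i m)]
  simp [hp]

end aux4

/-- A map `φ = ∑ φᵢ εⁱ : M → M ⊗ A[ε]/(ε^p)` satisfies the counit and coassociativity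
axioms iff `φ₀ = id` and `φᵢ ∘ φⱼ = C(i+j, i) φ_{i+j}` for `0 ≤ i, j < p` (with
`φ_{i+j} = 0` for `i+j ≥ p`).  In this case `φ₁^p = 0` and `φ = exp(φ₁ ε)`, i.e.
`i! • φᵢ = φ₁^i`. -/
theorem stmt9 (p : ℕ) [Fact p.Prime] (A : Type*) [CommRing A] [CharP A p]
    (M : Type*) [AddCommGroup M] [Module A M]
    (φ : ℕ → Module.End A M) (htop : ∀ n, p ≤ n → φ n = 0)
    (counit : Aeps p A →ₐ[A] A) (hcounit : counit (eps p A) = 0)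
    (comul : Aeps p A →ₐ[A] Aeps p A ⊗[A] Aeps p A)
    (hcomul : comul (eps p A) = eps p A ⊗ₜ 1 + 1 ⊗ₜ eps p A) :
    (((TensorProduct.rid A M).toLinearMap ∘ₗ
        LinearMap.lTensor M counit.toLinearMap ∘ₗ coactOf p A φ = LinearMap.id ∧
      LinearMap.rTensor (Aeps p A) (coactOf p A φ) ∘ₗ coactOf p A φ =
        (TensorProduct.assoc A M (Aeps p A) (Aeps p A)).symm.toLinearMap ∘ₗ
          LinearMap.lTensor M comul.toLinearMap ∘ₗ coactOf p A φ) ↔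
      (φ 0 = LinearMap.id ∧
        ∀ i j, i < p → j < p → φ i ∘ₗ φ j = ((i + j).choose i) • φ (i + j))) ∧
    ((φ 0 = LinearMap.id ∧
        ∀ i j, i < p → j < p → φ i ∘ₗ φ j = ((i + j).choose i) • φ (i + j)) →
      (φ 1) ^ p = 0 ∧ ∀ i, i < p → (i.factorial : ℕ) • φ i = (φ 1) ^ i) := by
  have hprime : p.Prime := Fact.out
  haveI : Nontrivial A := CharP.nontrivial_of_char_ne_one hprime.ne_one
  have hp0 : 0 < p := hprime.pos
  have hp1 : 1 < p := hprime.one_lt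
  constructor
  · constructor
    · rintro ⟨h1, h2⟩
      refine ⟨(counit_form p A φ hp0 counit hcounit).symm.trans h1, fun i j hi hj => ?_⟩
      apply LinearMap.ext; intro m
      have hm := LinearMap.congr_fun h2 m
      rw [LinearMap.comp_apply, LinearMap.comp_apply, LinearMap.comp_apply,
        F_form p A φ m, G_form p A φ htop comul hcomul m] at hm
      have e1 := congrArg (ext1 p A ⟨j, hj⟩) hm
      rw [extE p A ⟨j, hj⟩ (fun j => ∑ i ∈ Finset.range p, (φ i ∘ₗ φ j) m ⊗ₜ[A] (eps p A ^ i)),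
        extE p A ⟨j, hj⟩ (fun j => ∑ i ∈ Finset.range p,
          (((i + j).choose i) • φ (i + j)) m ⊗ₜ[A] (eps p A ^ i))] at e1
      have e2 := congrArg (ext1 p A ⟨i, hi⟩) e1
      rw [extE p A ⟨i, hi⟩ (fun i => (φ i ∘ₗ φ j) m),
        extE p A ⟨i, hi⟩ (fun i => (((i + j).choose i) • φ (i + j)) m)] at e2
      exact e2
    · rintro ⟨h1, h2⟩
      constructor
      · rw [counit_form p A φ hp0 counit hcounit, h1]
      · apply LinearMap.ext; intro m
        rw [LinearMap.comp_apply, LinearMap.comp_apply, LinearMap.comp_apply,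
          F_form p A φ m, G_form p A φ htop comul hcomul m]
        refine Finset.sum_congr rfl fun j hj => ?_
        congr 1
        refine Finset.sum_congr rfl fun i hi => ?_
        congr 1
        exact LinearMap.congr_fun
          (h2 i j (Finset.mem_range.mp hi) (Finset.mem_range.mp hj)) m
  · rintro ⟨h1, h2⟩
    have key : ∀ i, i < p → (i.factorial : ℕ) • φ i = (φ 1) ^ i := by
      intro i
      induction i with
      | zero => intro _; simp only [Nat.factorial, one_smul, pow_zero]; exact h1
      | succ n ih =>
        intro hn
        have hn' : n < p := by omega
        have h := h2 1 n hp1 hn'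
        have hch : (1 + n).choose 1 = n + 1 := by
          rw [Nat.choose_one_right]; omega
        calc ((n+1).factorial : ℕ) • φ (n+1)
            = n.factorial • ((n+1) • φ (n+1)) := by
              rw [smul_smul, Nat.factorial_succ, Nat.mul_comm]
          _ = n.factorial • (φ 1 ∘ₗ φ n) := by rw [h, hch, Nat.add_comm 1 n]
          _ = φ 1 * (n.factorial • φ n) := by
              rw [mul_smul_comm]; rfl
          _ = (φ 1) ^ (n+1) := by rw [ih hn', pow_succ']
    refine ⟨?_, key⟩
    have hchain := h2 1 (p - 1) hp1 (by omega)
    rw [show 1 + (p - 1) = p by omega, htop p le_rfl, smul_zero] at hchain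
    have hpow : (φ 1) ^ p = (φ 1) * (φ 1) ^ (p - 1) := by
      conv_lhs => rw [show p = 1 + (p - 1) by omega]
      rw [pow_add, pow_one]
    rw [hpow, ← key (p - 1) (by omega), mul_smul_comm,
      show φ 1 * φ (p - 1) = φ 1 ∘ₗ φ (p - 1) from rfl, hchain, smul_zero]


end
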